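/- arXiv:1702.08119 — 3 statements merged into one kernel-verified Lean document; each statement's English description precedes it below -/
import Mathlib

section
/- Let F be a forest (forestially ordered set). If f̲ ≤ e̲ = e_1⋯e_k is a broad relation between tuples with the e_i pairwise ≤_d-incomparable, then the decomposition f̲ = f̲_1⋯f̲_k with f̲_i ≤ e_i is unique; in fact, for any letter s of f̲, one has s ∈ f̲_i if and only if s ≤_d e_i. -/
universe u

namespace BroadPaper

/-- A broad relation on `X`: a relation between finite unordered tuples
(multisets) over `X` and elements of `X`. -/
abbrev Rel (X : Type u) : Type u := Multiset X → X → Prop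

variable {X : Type u} {Y : Type u} {A : Type u} {B : Type u} {Z : Type u}

/-- Broad transitivity: if `f₁ ⋯ fₙ ≤ e` and `g̲ᵢ ≤ fᵢ` then `g̲₁ ⋯ g̲ₙ ≤ e`,
encoded via a multiset of pairs `(g̲ᵢ, fᵢ)`. -/
def BTrans (r : Rel X) : Prop :=
  ∀ (p : Multiset (Multiset X × X)) (e : X),
    r (p.map Prod.snd) e → (∀ q ∈ p, r q.1 q.2) → r ((p.map Prod.fst).sum) e

/-- A pre-broad poset: reflexivity plus broad transitivity. -/
def IsPreBroad (r : Rel X) : Prop := (∀ e : X, r {e} e) ∧ BTrans r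

/-- A (commutative) broad poset: a pre-broad poset satisfying antisymmetry. -/
def IsBroad (r : Rel X) : Prop :=
  IsPreBroad r ∧ ∀ e f : X, r {e} f → r {f} e → e = f

/-- Simplicity: letters in any broad relation are pairwise distinct. -/
def Simple (r : Rel X) : Prop := ∀ fs e, r fs e → fs.Nodup

/-- The descendant relation `f ≤_d e`. -/
def descends (r : Rel X) (f e : X) : Prop := ∃ fs, r fs e ∧ f ∈ fs

def Comparable (r : Rel X) (f g : X) : Prop := descends r f g ∨ descends r g f

def Incomp (r : Rel X) (f g : X) : Prop := ¬ descends r f g ∧ ¬ descends r g f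

/-- Blockwise extension of a broad relation to a relation between tuples:
`fs ≤ es` iff `fs = f̲₁ ⋯ f̲ₖ`, `es = e₁ ⋯ eₖ` with `f̲ᵢ ≤ eᵢ`. -/
def tupleLE (r : Rel X) (fs es : Multiset X) : Prop :=
  ∃ p : Multiset (Multiset X × X),
    p.map Prod.snd = es ∧ (p.map Prod.fst).sum = fs ∧ ∀ q ∈ p, r q.1 q.2

/-- A leaf: no tuple strictly below `e`. -/
def IsLeaf (r : Rel X) (e : X) : Prop := ¬ ∃ fs, r fs e ∧ fs ≠ ({e} : Multiset X)

/-- `fs` is the maximum tuple strictly below `e` (written `e^↑`).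
If `fs ≠ 0`, `e` is a node; if `fs = 0`, `e` is a stump. -/
def upTuple (r : Rel X) (e : X) (fs : Multiset X) : Prop :=
  (r fs e ∧ fs ≠ ({e} : Multiset X)) ∧
    ∀ gs, r gs e → gs ≠ ({e} : Multiset X) → tupleLE r gs fs

def IsStump (r : Rel X) (e : X) : Prop := upTuple r e 0

/-- A dendroidally ordered set (tree): a finite simple broad poset in which
every element is a leaf, node or stump, with a `≤_d`-maximum (root). -/
def IsTree (r : Rel X) : Prop :=
  IsBroad r ∧ Finite X ∧ Simple r ∧
    (∀ e : X, IsLeaf r e ∨ ∃ fs, upTuple r e fs) ∧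
    ∃ rt : X, ∀ e, descends r e rt

def IsMaxEl (r : Rel X) (e : X) : Prop := ∀ s, descends r e s → s = e

/-- A forestially ordered set (forest): each element has a unique
`≤_d`-maximal element above it. -/
def IsForest (r : Rel X) : Prop :=
  IsBroad r ∧ Finite X ∧ Simple r ∧
    (∀ e : X, IsLeaf r e ∨ ∃ fs, upTuple r e fs) ∧
    ∀ e : X, ∃! rt : X, IsMaxEl r rt ∧ descends r e rt

/-- A map of broad posets: preserves broad relations (letterwise on tuples). -/
def BroadHom (r : Rel X) (r' : Rel Y) (φ : X → Y) : Prop :=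
  ∀ fs e, r fs e → r' (fs.map φ) (φ e)

/-- `rs` is the root tuple: the tuple of `≤_d`-maximal elements (no repeats). -/
def IsRootTuple (r : Rel X) (rs : Multiset X) : Prop :=
  rs.Nodup ∧ ∀ x, x ∈ rs ↔ IsMaxEl r x

/-- Independent map of forests: `φ(r̲_F)·e̲ ≤ r̲_{F'}` for some tuple `e̲`. -/
def Independent (r : Rel X) (r' : Rel Y) (φ : X → Y) : Prop :=
  ∃ (rs : Multiset X) (rs' : Multiset Y) (es : Multiset Y),
    IsRootTuple r rs ∧ IsRootTuple r' rs' ∧ tupleLE r' (rs.map φ + es) rs'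

/-- The (pre-)broad relation generated by a set of generating relations:
closure under reflexivity and broad transitivity. -/
inductive GenRel (gen : Rel X) : Rel X
  | of : ∀ fs e, gen fs e → GenRel gen fs e
  | refl : ∀ e, GenRel gen {e} e
  | btrans : ∀ (p : Multiset (Multiset X × X)) (e : X),
      GenRel gen (p.map Prod.snd) e → (∀ q ∈ p, GenRel gen q.1 q.2) →
      GenRel gen ((p.map Prod.fst).sum) e

/-- Generators of the tensor product `S ⊗ T`: relations `s̲ × t ≤ (s,t)` and
`s × t̲ ≤ (s,t)`. -/
def tensorGen (rS : Rel A) (rT : Rel B) : Rel (A × B) := fun xs x =>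
  (∃ as, rS as x.1 ∧ xs = as.map fun a => (a, x.2)) ∨
  (∃ bs, rT bs x.2 ∧ xs = bs.map fun b => (x.1, b))

/-- The tensor product broad relation on `A × B`. -/
def tensorRel (rS : Rel A) (rT : Rel B) : Rel (A × B) := GenRel (tensorGen rS rT)

/-- Product of tuples: all pairs from `as` and `bs`. -/
def mprod (as : Multiset A) (bs : Multiset B) : Multiset (A × B) :=
  as.bind fun a => bs.map fun b => (a, b)

end BroadPaper


namespace BroadPaper

section Helpers

variable {X : Type u} {r : Rel X} [DecidableEq X]

theorem subst_one (hb : IsBroad r) {fs gs : Multiset X} {e a : X}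
    (hfs : r fs e) (ha : a ∈ fs) (hgs : r gs a) : r (gs + fs.erase a) e := by
  have h := hb.1.2 ((gs, a) ::ₘ (fs.erase a).map (fun x => (({x} : Multiset X), x))) e
  simp only [Multiset.map_cons, Multiset.map_map, Function.comp] at h
  rw [show ((fs.erase a).map fun x => (({x} : Multiset X), x).2) = fs.erase a by simp,
    Multiset.cons_erase ha] at h
  have h2 := h hfs ?_
  · rw [show ((fs.erase a).map fun x => (({x} : Multiset X), x).1)
        = (fs.erase a).map (fun x => ({x} : Multiset X)) by simp,
      Multiset.sum_cons, Multiset.sum_map_singleton] at h2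
    exact h2
  · intro q hq
    rcases Multiset.mem_cons.1 hq with h | h
    · subst h; exact hgs
    · obtain ⟨x, _, rfl⟩ := Multiset.mem_map.1 h
      exact hb.1.1 x

theorem eq_singleton_of_self_mem (hb : IsBroad r) (hsi : Simple r) {fs : Multiset X} {e : X}
    (hfs : r fs e) (he : e ∈ fs) : fs = {e} := by
  have h := subst_one hb hfs he hfs
  have hnd := hsi _ _ h
  have hdisj := Multiset.disjoint_of_nodup_add hnd
  have h0 : fs.erase e = 0 := by
    by_contra hne
    obtain ⟨x, hx⟩ := Multiset.exists_mem_of_ne_zero hne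
    exact Multiset.disjoint_left.1 hdisj (Multiset.mem_of_mem_erase hx) hx
  rw [← Multiset.cons_erase he, h0]; rfl

theorem descends_refl (hb : IsBroad r) (e : X) : descends r e e :=
  ⟨{e}, hb.1.1 e, Multiset.mem_singleton_self e⟩

theorem descends_trans (hb : IsBroad r) {s f e : X}
    (h1 : descends r s f) (h2 : descends r f e) : descends r s e := by
  obtain ⟨fs, hfs, hsf⟩ := h1
  obtain ⟨gs, hgs, hfg⟩ := h2
  exact ⟨fs + gs.erase f, subst_one hb hgs hfg hfs, Multiset.mem_add.2 (Or.inl hsf)⟩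

theorem descends_antisymm (hb : IsBroad r) (hsi : Simple r) {e f : X}
    (h1 : descends r e f) (h2 : descends r f e) : e = f := by
  obtain ⟨fs, hfs, hef⟩ := h1
  obtain ⟨gs, hgs, hfg⟩ := h2
  have h := subst_one hb hfs hef hgs
  have hsing := eq_singleton_of_self_mem hb hsi h (Multiset.mem_add.2 (Or.inl hfg))
  have hcard : Multiset.card gs + Multiset.card (fs.erase e) = 1 := by
    have := congrArg Multiset.card hsing
    simpa using this
  have hgpos : 1 ≤ Multiset.card gs := Multiset.card_pos_iff_exists_mem.2 ⟨f, hfg⟩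
  have hfse : Multiset.card (fs.erase e) = 0 := by omega
  have hfse0 : fs.erase e = 0 := Multiset.card_eq_zero.1 hfse
  have hgs1 : gs = {f} := by
    rw [hfse0, add_zero] at hsing; exact hsing
  have hfs1 : fs = {e} := by
    rw [← Multiset.cons_erase hef, hfse0]; rfl
  exact hb.2 e f (hfs1 ▸ hfs) (hgs1 ▸ hgs)

theorem child_lt (hb : IsBroad r) (hsi : Simple r) {e : X} {ts : Multiset X}
    (hup : upTuple r e ts) {c : X} (hc : c ∈ ts) : descends r c e ∧ c ≠ e := by
  refine ⟨⟨ts, hup.1.1, hc⟩, ?_⟩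
  rintro rfl
  exact hup.1.2 (eq_singleton_of_self_mem hb hsi hup.1.1 hc)

theorem descends_to_child (hb : IsBroad r) {s e : X} (hd : descends r s e) (hne : s ≠ e)
    {ts : Multiset X} (hup : upTuple r e ts) : ∃ c ∈ ts, descends r s c := by
  obtain ⟨gs, hgs, hsg⟩ := hd
  have hgsne : gs ≠ {e} := by rintro rfl; exact hne (Multiset.mem_singleton.1 hsg)
  obtain ⟨P, hP1, hP2, hP3⟩ := hup.2 gs hgs hgsne
  rw [← hP2] at hsg
  have hsg' : s ∈ (P.map Prod.fst).join := hsg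
  obtain ⟨b, hbm, hsb⟩ := Multiset.mem_join.1 hsg'
  obtain ⟨q, hq, rfl⟩ := Multiset.mem_map.1 hbm
  exact ⟨q.2, hP1 ▸ Multiset.mem_map_of_mem _ hq, ⟨q.1, hP3 q hq, hsb⟩⟩

theorem sibling_disjoint (hb : IsBroad r) (hsi : Simple r) {e : X} {ts : Multiset X}
    (hup : upTuple r e ts) {c c' s : X} (hc : c ∈ ts) (hc' : c' ∈ ts) (hne : c ≠ c')
    (h1 : descends r s c) (h2 : descends r s c') : False := by
  obtain ⟨gs, hgs, hsg⟩ := h1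
  obtain ⟨gs', hgs', hsg'⟩ := h2
  have hA := subst_one hb hup.1.1 hc hgs
  have hc'e : c' ∈ ts.erase c := (Multiset.mem_erase_of_ne (Ne.symm hne)).2 hc'
  by_cases hsc' : s = c'
  · subst hsc'
    have hnd := hsi _ _ hA
    exact Multiset.disjoint_left.1 (Multiset.disjoint_of_nodup_add hnd) hsg hc'e
  · have hB := subst_one hb hA (Multiset.mem_add.2 (Or.inr hc'e)) hgs'
    have hnd := hsi _ _ hB
    have hsmem : s ∈ (gs + ts.erase c).erase c' :=
      (Multiset.mem_erase_of_ne hsc').2 (Multiset.mem_add.2 (Or.inl hsg))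
    exact Multiset.disjoint_left.1 (Multiset.disjoint_of_nodup_add hnd) hsg' hsmem

/-- The partial order given by the descendant relation. -/
def descPO (hb : IsBroad r) (hsi : Simple r) : PartialOrder X where
  le a b := descends r a b
  le_refl := descends_refl hb
  le_trans _ _ _ h1 h2 := descends_trans hb h1 h2
  le_antisymm _ _ h1 h2 := descends_antisymm hb hsi h1 h2

theorem exists_max_above (hb : IsBroad r) (hsi : Simple r) (hfin : Finite X) (e : X) :
    ∃ m, descends r e m ∧ IsMaxEl r m := by
  letI := hfin
  letI : PartialOrder X := descPO hb hsi
  have wf : WellFounded ((· > ·) : X → X → Prop) := (Finite.to_wellFoundedGT).wf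
  obtain ⟨m, hm, hmax⟩ := wf.has_min {x | descends r e x} ⟨e, descends_refl hb e⟩
  refine ⟨m, hm, fun t ht => ?_⟩
  have htmem : descends r e t := descends_trans hb hm ht
  have hnlt := hmax t htmem
  have hle : m ≤ t := ht
  rcases lt_or_eq_of_le hle with hlt | heq
  · exact absurd hlt hnlt
  · exact heq.symm

theorem comparable_of_descends (hf : IsForest r) {s e e' : X}
    (h1 : descends r s e) (h2 : descends r s e') : Comparable r e e' := by
  obtain ⟨hb, hfin, hsi, hleaf, huniq⟩ := hf
  letI := hfin
  letI : PartialOrder X := descPO hb hsi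
  have wf : WellFounded ((· < ·) : X → X → Prop) := (Finite.to_wellFoundedLT).wf
  have key : ∀ t : X, ∀ e e' s : X, descends r s e → descends r s e' →
      descends r e t → descends r e' t → Comparable r e e' := by
    intro t
    refine WellFounded.induction wf
      (C := fun t => ∀ e e' s : X, descends r s e → descends r s e' →
        descends r e t → descends r e' t → Comparable r e e') t ?_
    intro t IH e e' s h1 h2 het he't
    by_cases het' : e = t
    · subst het'; exact Or.inr he't
    by_cases he't' : e' = t
    · subst he't'; exact Or.inl het
    have hnl : ¬ IsLeaf r t := by
      obtain ⟨gs, hgs, hmem⟩ := het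
      intro hl
      exact hl ⟨gs, hgs, fun hgse => het' (by
        rw [hgse] at hmem; exact Multiset.mem_singleton.1 hmem)⟩
    obtain ⟨ts, hts⟩ := (hleaf t).resolve_left hnl
    obtain ⟨c, hc, hec⟩ := descends_to_child hb het het' hts
    obtain ⟨c', hc', he'c'⟩ := descends_to_child hb he't he't' hts
    have hsc : descends r s c := descends_trans hb h1 hec
    have hsc' : descends r s c' := descends_trans hb h2 he'c'
    by_cases hcc : c = c'
    · subst hcc
      have hclt := child_lt hb hsi hts hc
      have hlt : c < t := lt_of_le_of_ne hclt.1 hclt.2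
      exact IH c hlt e e' s h1 h2 hec he'c'
    · exact (sibling_disjoint hb hsi hts hc hc' hcc hsc hsc').elim
  obtain ⟨m, hem, hmmax⟩ := exists_max_above hb hsi hfin e
  obtain ⟨m', he'm', hm'max⟩ := exists_max_above hb hsi hfin e'
  obtain ⟨rt, _, hun⟩ := huniq s
  have h1m : descends r s m := descends_trans hb h1 hem
  have h2m' : descends r s m' := descends_trans hb h2 he'm'
  have e1 : m = rt := hun m ⟨hmmax, h1m⟩
  have e2 : m' = rt := hun m' ⟨hm'max, h2m'⟩
  have he'm : descends r e' m := by rw [e1, ← e2]; exact he'm'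
  exact key m e e' s h1 h2 hem he'm

theorem eq_of_snd_eq {α β : Type u} [DecidableEq α] [DecidableEq β] {p : Multiset (α × β)} (h : (p.map Prod.snd).Nodup)
    {q q' : α × β} (hq : q ∈ p) (hq' : q' ∈ p) (he : q.2 = q'.2) : q = q' := by
  by_contra hne
  have hq'' : q' ∈ p.erase q := (Multiset.mem_erase_of_ne (Ne.symm hne)).2 hq'
  have hrw : p = q ::ₘ p.erase q := (Multiset.cons_erase hq).symm
  rw [hrw, Multiset.map_cons] at h
  exact (Multiset.nodup_cons.1 h).1 (by
    rw [he]; exact Multiset.mem_map_of_mem Prod.snd hq'')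

end Helpers

end BroadPaper

namespace BroadPaper

/-- In a forest, if `f̲ ≤ e̲` with the letters of `e̲`
pairwise `≤_d`-incomparable, the block decomposition `f̲ = f̲₁ ⋯ f̲ₖ` with
`f̲ᵢ ≤ eᵢ` is unique, and a letter `s` of `f̲` lies in the block `f̲ᵢ` iff
`s ≤_d eᵢ`. -/
theorem stmt8 {X : Type u} (r : Rel X) (hf : IsForest r)
    (fs es : Multiset X) (hinc : es.Pairwise (Incomp r))
    (p p' : Multiset (Multiset X × X))
    (hp : p.map Prod.snd = es ∧ (p.map Prod.fst).sum = fs ∧ ∀ q ∈ p, r q.1 q.2)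
    (hp' : p'.map Prod.snd = es ∧ (p'.map Prod.fst).sum = fs ∧
      ∀ q ∈ p', r q.1 q.2) :
    p = p' ∧ ∀ q ∈ p, ∀ s ∈ fs, (s ∈ q.1 ↔ descends r s q.2) := by
  classical
  have hb : IsBroad r := hf.1
  have hsimp : Simple r := hf.2.2.1
  -- `es` has no duplicates
  have hsym : Symmetric (Incomp r) := fun a b h => ⟨h.2, h.1⟩
  have hesnd : es.Nodup := by
    rw [Multiset.nodup_iff_pairwise]
    obtain ⟨l, hl, hlp⟩ := hinc
    exact ⟨l, hl, hlp.imp (fun {a b} h => by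
      rintro rfl; exact h.1 (descends_refl hb a))⟩
  have hincall : ∀ a ∈ es, ∀ b ∈ es, a ≠ b → Incomp r a b :=
    fun a ha b hb' hne => by haveI : Std.Symm (Incomp r) := ⟨fun a b h => hsym h⟩; exact hinc.forall ha hb' hne
  -- the letter-membership characterisation, for any decomposition
  have mem_block : ∀ (P : Multiset (Multiset X × X)),
      (P.map Prod.snd = es ∧ (P.map Prod.fst).sum = fs ∧ ∀ q ∈ P, r q.1 q.2) →
      ∀ q ∈ P, ∀ s ∈ fs, (s ∈ q.1 ↔ descends r s q.2) := by
    rintro P ⟨hP1, hP2, hP3⟩ q hq s hsfs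
    constructor
    · intro hsq; exact ⟨q.1, hP3 q hq, hsq⟩
    · intro hsd
      rw [← hP2] at hsfs
      have hsfs' : s ∈ (P.map Prod.fst).join := hsfs
      obtain ⟨b, hbm, hsb⟩ := Multiset.mem_join.1 hsfs'
      obtain ⟨q', hq', rfl⟩ := Multiset.mem_map.1 hbm
      have hsd' : descends r s q'.2 := ⟨q'.1, hP3 q' hq', hsb⟩
      have hsndnd : (P.map Prod.snd).Nodup := by rw [hP1]; exact hesnd
      have hq2 : q.2 ∈ es := hP1 ▸ Multiset.mem_map_of_mem _ hq
      have hq'2 : q'.2 ∈ es := hP1 ▸ Multiset.mem_map_of_mem _ hq'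
      have heq2 : q.2 = q'.2 := by
        by_contra hne
        have hcomp := comparable_of_descends hf hsd hsd'
        have hic := hincall q.2 hq2 q'.2 hq'2 hne
        rcases hcomp with h | h
        · exact hic.1 h
        · exact hic.2 h
      have : q = q' := eq_of_snd_eq hsndnd hq hq' heq2
      rw [this]; exact hsb
  -- `fs` has no duplicates
  have hfsnd : fs.Nodup := by
    obtain ⟨hP1, hP2, hP3⟩ := hp
    rw [← hP2]
    have hbind : (p.map Prod.fst).sum = p.bind Prod.fst := rfl
    rw [hbind, Multiset.nodup_bind]
    have hsndnd : (p.map Prod.snd).Nodup := by rw [hP1]; exact hesnd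
    refine ⟨fun q hq => hsimp _ _ (hP3 q hq), ?_⟩
    refine Multiset.Nodup.pairwise ?_ (Multiset.Nodup.of_map _ hsndnd)
    intro q hq q' hq' hne
    rw [Function.onFun, Multiset.disjoint_left]
    intro s hsq hsq'
    have h1 : descends r s q.2 := ⟨q.1, hP3 q hq, hsq⟩
    have h2 : descends r s q'.2 := ⟨q'.1, hP3 q' hq', hsq'⟩
    have hne2 : q.2 ≠ q'.2 := fun h => hne (eq_of_snd_eq hsndnd hq hq' h)
    have hq2 : q.2 ∈ es := hP1 ▸ Multiset.mem_map_of_mem _ hq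
    have hq'2 : q'.2 ∈ es := hP1 ▸ Multiset.mem_map_of_mem _ hq'
    have hic := hincall q.2 hq2 q'.2 hq'2 hne2
    rcases comparable_of_descends hf h1 h2 with h | h
    · exact hic.1 h
    · exact hic.2 h
  -- each block equals a filter of `fs`
  have block_eq : ∀ (P : Multiset (Multiset X × X)),
      (P.map Prod.snd = es ∧ (P.map Prod.fst).sum = fs ∧ ∀ q ∈ P, r q.1 q.2) →
      ∀ q ∈ P, q.1 = fs.filter (fun s => descends r s q.2) := by
    rintro P hP q hq
    have hnd1 : q.1.Nodup := hsimp _ _ (hP.2.2 q hq)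
    have hnd2 : (fs.filter (fun s => descends r s q.2)).Nodup := hfsnd.filter _
    rw [Multiset.Nodup.ext hnd1 hnd2]
    intro a
    constructor
    · intro ha
      have hafs : a ∈ fs := by
        rw [← hP.2.1]
        have : a ∈ (P.map Prod.fst).join :=
          Multiset.mem_join.2 ⟨q.1, Multiset.mem_map_of_mem _ hq, ha⟩
        exact this
      exact Multiset.mem_filter.2 ⟨hafs, ⟨q.1, hP.2.2 q hq, ha⟩⟩
    · intro ha
      obtain ⟨hafs, had⟩ := Multiset.mem_filter.1 ha
      exact (mem_block P hP q hq a hafs).2 had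
  -- both decompositions equal the canonical one
  have hcanon : ∀ (P : Multiset (Multiset X × X)),
      (P.map Prod.snd = es ∧ (P.map Prod.fst).sum = fs ∧ ∀ q ∈ P, r q.1 q.2) →
      P = es.map (fun e => (fs.filter (fun s => descends r s e), e)) := by
    intro P hP
    have hmc : P.map (fun q => (fs.filter (fun s => descends r s q.2), q.2)) = P.map id :=
      Multiset.map_congr rfl (fun q hq => by
        have := block_eq P hP q hq
        exact Prod.ext this.symm rfl)
    calc P = P.map id := by simp
      _ = P.map ((fun e => (fs.filter (fun s => descends r s e), e)) ∘ Prod.snd) := hmc.symm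
      _ = (P.map Prod.snd).map (fun e => (fs.filter (fun s => descends r s e), e)) := by
          rw [Multiset.map_map]
      _ = es.map (fun e => (fs.filter (fun s => descends r s e), e)) := by rw [hP.1]
  exact ⟨(hcanon p hp).trans (hcanon p' hp').symm, mem_block p hp⟩


end BroadPaper
end

section
/- A map of forests φ: F → F' that is both a face map (injective on underlying sets) and a degeneracy (surjective on underlying sets, and ε ≰ φ(l) for every leaf l of F) is an isomorphism of broad posets. -/
universe u

namespace BroadPaper

section Aux

variable {X : Type u} {Y : Type u}

/-- Membership in a sum of multisets. -/
lemma aux_mem_msum {s : Multiset (Multiset X)} {a : X} :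
    a ∈ s.sum ↔ ∃ m ∈ s, a ∈ m := by
  induction s using Multiset.induction_on with
  | empty => simp
  | cons b t ih => simp [Multiset.sum_cons, ih, or_and_right, exists_or]

lemma aux_sum_sum (s : Multiset (Multiset X)) (f : X → ℕ) :
    ((s.sum).map f).sum = (s.map fun t => (t.map f).sum).sum := by
  induction s using Multiset.induction_on with
  | empty => simp
  | cons b t ih => simp [Multiset.sum_cons, ih]

lemma aux_map_msum (s : Multiset (Multiset X)) (g : X → Y) :
    (s.sum).map g = (s.map (Multiset.map g)).sum := by
  induction s using Multiset.induction_on with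
  | empty => simp
  | cons b t ih => simp [Multiset.sum_cons, ih]

lemma aux_termwise {α : Type u} {m : Multiset α} {f g : α → ℕ}
    (hle : ∀ a ∈ m, f a ≤ g a) (heq : (m.map f).sum = (m.map g).sum) :
    ∀ a ∈ m, f a = g a := by
  induction m using Multiset.induction_on with
  | empty => simp
  | cons b t ih =>
    have h1 : f b ≤ g b := hle b (Multiset.mem_cons_self _ _)
    have h2 : ∀ a ∈ t, f a ≤ g a := fun a ha => hle a (Multiset.mem_cons_of_mem ha)
    have h3 : (t.map f).sum ≤ (t.map g).sum := Multiset.sum_map_le_sum_map _ _ h2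
    simp only [Multiset.map_cons, Multiset.sum_cons] at heq
    intro a ha
    rcases Multiset.mem_cons.1 ha with rfl | ha'
    · omega
    · exact ih h2 (by omega) a ha'

lemma aux_blocks_sum {p : Multiset (Multiset X × X)}
    (h : ∀ q ∈ p, q.1 = ({q.2} : Multiset X)) :
    (p.map Prod.fst).sum = p.map Prod.snd := by
  have : p.map Prod.fst = p.map fun q => ({q.2} : Multiset X) :=
    Multiset.map_congr rfl h
  rw [this]
  have : (p.map fun q => ({q.2} : Multiset X))
      = (p.map Prod.snd).map fun a => ({a} : Multiset X) := by
    rw [Multiset.map_map]; rfl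
  rw [this, Multiset.sum_map_singleton]

lemma aux_two_mem {as bs : Multiset X} {z : X}
    (ha : z ∈ as) (hb : z ∈ bs) (hnd : (as + bs).Nodup) : False := by
  classical
  rw [Multiset.nodup_iff_count_le_one] at hnd
  have := hnd z
  rw [Multiset.count_add] at this
  have h1 := Multiset.count_pos.2 ha
  have h2 := Multiset.count_pos.2 hb
  omega

variable {r : Rel X}

lemma aux_subst [DecidableEq X] (hpre : IsPreBroad r) {fs gs : Multiset X} {e f : X}
    (h1 : r fs e) (hf : f ∈ fs) (h2 : r gs f) :
    r (fs.erase f + gs) e := by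
  have key := hpre.2 ((gs, f) ::ₘ (fs.erase f).map (fun z => (({z} : Multiset X), z))) e
  simp only [Multiset.map_cons, Multiset.map_map, Function.comp_def,
    Multiset.sum_cons, Multiset.map_id'] at key
  rw [Multiset.sum_map_singleton] at key
  have hsnd : f ::ₘ fs.erase f = fs := Multiset.cons_erase hf
  rw [hsnd] at key
  have := key h1 ?_
  · rwa [add_comm] at this
  · intro q hq
    rcases Multiset.mem_cons.1 hq with rfl | hq'
    · exact h2
    · obtain ⟨z, _, rfl⟩ := Multiset.mem_map.1 hq'
      exact hpre.1 z

/-- If `e` occurs in a tuple below `e`, the tuple is `{e}`. -/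
lemma aux_mem_self (hpre : IsPreBroad r) (hsimp : Simple r) {ks : Multiset X} {e : X}
    (h : r ks e) (he : e ∈ ks) : ks = {e} := by
  classical
  obtain ⟨ks', hks⟩ : ∃ ks', ks = e ::ₘ ks' := ⟨ks.erase e, (Multiset.cons_erase he).symm⟩
  subst hks
  rcases Multiset.empty_or_exists_mem ks' with h0 | ⟨k, hk⟩
  · simp [h0]
  · exfalso
    have key := hpre.2 (((e ::ₘ ks' : Multiset X), e) ::ₘ ks'.map (fun z => (({z} : Multiset X), z))) e
    simp only [Multiset.map_cons, Multiset.map_map, Function.comp_def,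
      Multiset.sum_cons, Multiset.map_id'] at key
    rw [Multiset.sum_map_singleton] at key
    have key2 := key h ?_
    · have hnd := hsimp _ _ key2
      exact aux_two_mem (Multiset.mem_cons_of_mem hk) hk hnd
    · intro q hq
      rcases Multiset.mem_cons.1 hq with rfl | hq'
      · exact h
      · obtain ⟨z, _, rfl⟩ := Multiset.mem_map.1 hq'
        exact hpre.1 z

lemma aux_desc_refl (hpre : IsPreBroad r) (e : X) : descends r e e :=
  ⟨{e}, hpre.1 e, Multiset.mem_singleton_self e⟩

lemma aux_desc_trans (hpre : IsPreBroad r) {f g e : X}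
    (h1 : descends r f g) (h2 : descends r g e) : descends r f e := by
  classical
  obtain ⟨fs, hfs, hffs⟩ := h1
  obtain ⟨gs, hgs, hggs⟩ := h2
  exact ⟨gs.erase g + fs, aux_subst hpre hgs hggs hfs,
    Multiset.mem_add.2 (Or.inr hffs)⟩

lemma aux_desc_antisymm (hbr : IsBroad r) (hsimp : Simple r) {f e : X}
    (h1 : descends r f e) (h2 : descends r e f) : f = e := by
  classical
  obtain ⟨fs, hfs, hffs⟩ := h1
  obtain ⟨gs, hgs, hegs⟩ := h2
  have hsub : r (fs.erase f + gs) e := aux_subst hbr.1 hfs hffs hgs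
  have heq : fs.erase f + gs = {e} :=
    aux_mem_self hbr.1 hsimp hsub (Multiset.mem_add.2 (Or.inr hegs))
  have hcard : Multiset.card (fs.erase f) + Multiset.card gs = 1 := by
    have := congrArg Multiset.card heq
    simpa using this
  have hgs0 : gs ≠ 0 := fun h => by simp [h] at hegs
  have hgscard : 1 ≤ Multiset.card gs := by
    rcases Multiset.empty_or_exists_mem gs with h | ⟨a, ha⟩
    · exact absurd h hgs0
    · exact Multiset.card_pos.2 (fun h => by simp [h] at ha)
  have hfe0 : fs.erase f = 0 := by
    have : Multiset.card (fs.erase f) = 0 := by omega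
    exact Multiset.card_eq_zero.1 this
  have hgse : gs = {e} := by rwa [hfe0, zero_add] at heq
  have hfsf : fs = {f} := by
    have := Multiset.cons_erase hffs
    rw [hfe0] at this
    simpa using this.symm
  rw [hfsf] at hfs
  rw [hgse] at hgs
  exact (hbr.2 e f hgs hfs).symm

/-- Branch uniqueness: two distinct letters of a tuple below `e` have no
common descendant. -/
lemma aux_branch (hpre : IsPreBroad r) (hsimp : Simple r) {bs : Multiset X}
    {e f1 f2 z : X} (h : r bs e) (h1 : f1 ∈ bs) (h2 : f2 ∈ bs) (hne : f1 ≠ f2)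
    (d1 : descends r z f1) (d2 : descends r z f2) : False := by
  classical
  obtain ⟨gs1, hgs1, hz1⟩ := d1
  obtain ⟨gs2, hgs2, hz2⟩ := d2
  by_cases hzf2 : z = f2
  · subst hzf2
    have hsub : r (bs.erase f1 + gs1) e := aux_subst hpre h h1 hgs1
    have hnd := hsimp _ _ hsub
    exact aux_two_mem (Multiset.mem_erase_of_ne hne.symm |>.2 h2) hz1 hnd
  · have hsub1 : r (bs.erase f1 + gs1) e := aux_subst hpre h h1 hgs1
    have hf2' : f2 ∈ bs.erase f1 + gs1 :=
      Multiset.mem_add.2 (Or.inl ((Multiset.mem_erase_of_ne hne.symm).2 h2))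
    have hsub2 : r ((bs.erase f1 + gs1).erase f2 + gs2) e :=
      aux_subst hpre hsub1 hf2' hgs2
    have hnd := hsimp _ _ hsub2
    have hzmem : z ∈ (bs.erase f1 + gs1).erase f2 :=
      (Multiset.mem_erase_of_ne hzf2).2 (Multiset.mem_add.2 (Or.inr hz1))
    exact aux_two_mem hzmem hz2 hnd

lemma aux_rel_decomp (hF : IsForest r) {gs : Multiset X} {e : X}
    (h : r gs e) (hne : gs ≠ ({e} : Multiset X)) :
    ∃ fs, upTuple r e fs ∧ tupleLE r gs fs := by
  rcases hF.2.2.2.1 e with hl | ⟨fs, hfs⟩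
  · exact absurd ⟨gs, h, hne⟩ hl
  · exact ⟨fs, hfs, hfs.2 gs h hne⟩

/-- Strict-below relation. -/
def SLt (r : Rel X) (f e : X) : Prop := descends r f e ∧ f ≠ e

lemma aux_mem_up_strict (hF : IsForest r) {e : X} {fs : Multiset X}
    (hu : upTuple r e fs) {f : X} (hf : f ∈ fs) : SLt r f e := by
  refine ⟨⟨fs, hu.1.1, hf⟩, ?_⟩
  rintro rfl
  exact hu.1.2 (aux_mem_self hF.1.1 hF.2.2.1 hu.1.1 hf)

lemma aux_slt_wf (hF : IsForest r) : WellFounded (SLt r) := by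
  haveI := hF.2.1
  haveI : IsTrans X (SLt r) := ⟨by
    rintro a b c ⟨hab, hab'⟩ ⟨hbc, hbc'⟩
    refine ⟨aux_desc_trans hF.1.1 hab hbc, ?_⟩
    rintro rfl
    exact hbc' (aux_desc_antisymm hF.1 hF.2.2.1 hbc hab)⟩
  haveI : IsIrrefl X (SLt r) := ⟨fun a h => h.2 rfl⟩
  exact Finite.wellFounded_of_trans_of_irrefl _

lemma aux_sgt_wf (hF : IsForest r) : WellFounded (fun a b => SLt r b a) := by
  haveI := hF.2.1
  haveI : IsTrans X (fun a b => SLt r b a) := ⟨by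
    rintro a b c ⟨hab, hab'⟩ ⟨hbc, hbc'⟩
    refine ⟨aux_desc_trans hF.1.1 hbc hab, ?_⟩
    rintro rfl
    exact hab' (aux_desc_antisymm hF.1 hF.2.2.1 hab hbc)⟩
  haveI : IsIrrefl X (fun a b => SLt r b a) := ⟨fun a h => h.2 rfl⟩
  exact Finite.wellFounded_of_trans_of_irrefl _

/-- Anything strictly below `e` lies below a letter of `e`'s maximal tuple. -/
lemma aux_below_up (_hF : IsForest r) {e z : X} {fs : Multiset X}
    (hu : upTuple r e fs) (hz : descends r z e) (hne : z ≠ e) :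
    ∃ f ∈ fs, descends r z f := by
  obtain ⟨gs, hgs, hzgs⟩ := hz
  have hgsne : gs ≠ ({e} : Multiset X) := by
    rintro rfl
    exact hne (Multiset.mem_singleton.1 hzgs)
  obtain ⟨p, hpsnd, hpsum, hprels⟩ := hu.2 gs hgs hgsne
  have : z ∈ (p.map Prod.fst).sum := hpsum ▸ hzgs
  obtain ⟨b, hb, hzb⟩ := aux_mem_msum.1 this
  obtain ⟨q, hq, rfl⟩ := Multiset.mem_map.1 hb
  refine ⟨q.2, ?_, ⟨q.1, hprels q hq, hzb⟩⟩
  rw [← hpsnd]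
  exact Multiset.mem_map_of_mem _ hq

/-- Every strictly smaller element is a letter of some maximal tuple below `e`. -/
lemma aux_parent (hF : IsForest r) :
    ∀ w y, SLt r y w → ∃ c ks, upTuple r c ks ∧ y ∈ ks ∧ descends r c w := by
  intro w
  refine (aux_slt_wf hF).induction
    (C := fun w => ∀ y, SLt r y w → ∃ c ks, upTuple r c ks ∧ y ∈ ks ∧ descends r c w) w ?_
  rintro w IH y ⟨⟨gs, hgs, hygs⟩, hyne⟩
  have hgsne : gs ≠ ({w} : Multiset X) := by
    rintro rfl
    exact hyne (Multiset.mem_singleton.1 hygs)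
  obtain ⟨ks, huks, p, hpsnd, hpsum, hprels⟩ := aux_rel_decomp hF hgs hgsne
  have hymem : y ∈ (p.map Prod.fst).sum := hpsum ▸ hygs
  obtain ⟨b, hb, hyb⟩ := aux_mem_msum.1 hymem
  obtain ⟨q, hq, rfl⟩ := Multiset.mem_map.1 hb
  have hq2ks : q.2 ∈ ks := by
    rw [← hpsnd]; exact Multiset.mem_map_of_mem _ hq
  by_cases hyq : y = q.2
  · exact ⟨w, ks, huks, hyq ▸ hq2ks, aux_desc_refl hF.1.1 w⟩
  · have hslt : SLt r q.2 w := aux_mem_up_strict hF huks hq2ks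
    obtain ⟨c, ks', h1, h2, h3⟩ := IH q.2 hslt y ⟨⟨q.1, hprels q hq, hyb⟩, hyq⟩
    exact ⟨c, ks', h1, h2, aux_desc_trans hF.1.1 h3 hslt.1⟩

/-- Descendant cone. -/
def Dle (r : Rel X) (e : X) : Set X := {z | descends r z e}

/-- Union of descendant cones over a tuple. -/
def UD (r : Rel X) (bs : Multiset X) : Set X := {z | ∃ f ∈ bs, descends r z f}

lemma aux_split [Finite X] {bs : Multiset X} (hnd : bs.Nodup)
    (hdisj : ∀ f1 ∈ bs, ∀ f2 ∈ bs, ∀ z, descends r z f1 → descends r z f2 → f1 = f2) :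
    (UD r bs).ncard = (bs.map fun f => (Dle r f).ncard).sum := by
  induction bs using Multiset.induction_on with
  | empty =>
    have : UD r (0 : Multiset X) = ∅ := by
      ext z; simp [UD]
    simp [this]
  | cons b t ih =>
    rw [Multiset.nodup_cons] at hnd
    have hUD : UD r (b ::ₘ t) = Dle r b ∪ UD r t := by
      ext z
      simp only [UD, Dle, Set.mem_setOf_eq, Set.mem_union, Multiset.mem_cons]
      constructor
      · rintro ⟨f, (rfl | hf), hzf⟩
        · exact Or.inl hzf
        · exact Or.inr ⟨f, hf, hzf⟩
      · rintro (hz | ⟨f, hf, hzf⟩)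
        · exact ⟨b, Or.inl rfl, hz⟩
        · exact ⟨f, Or.inr hf, hzf⟩
    have hdis : Disjoint (Dle r b) (UD r t) := by
      rw [Set.disjoint_left]
      rintro z hz ⟨f, hf, hzf⟩
      have : b = f := hdisj b (Multiset.mem_cons_self _ _) f
        (Multiset.mem_cons_of_mem hf) z hz hzf
      exact hnd.1 (this ▸ hf)
    have hdisj' : ∀ f1 ∈ t, ∀ f2 ∈ t, ∀ z, descends r z f1 → descends r z f2 → f1 = f2 :=
      fun f1 h1 f2 h2 z d1 d2 => hdisj f1 (Multiset.mem_cons_of_mem h1) f2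
        (Multiset.mem_cons_of_mem h2) z d1 d2
    rw [hUD, Set.ncard_union_eq hdis (Set.toFinite _) (Set.toFinite _),
      ih hnd.2 hdisj', Multiset.map_cons, Multiset.sum_cons]

lemma aux_cone (hF : IsForest r) {e : X} {fs : Multiset X} (hu : upTuple r e fs) :
    (Dle r e).ncard = 1 + (fs.map fun f => (Dle r f).ncard).sum := by
  haveI := hF.2.1
  have hnd : fs.Nodup := hF.2.2.1 _ _ hu.1.1
  have hdisj : ∀ f1 ∈ fs, ∀ f2 ∈ fs, ∀ z, descends r z f1 → descends r z f2 → f1 = f2 := by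
    intro f1 h1 f2 h2 z d1 d2
    by_contra hne
    exact aux_branch hF.1.1 hF.2.2.1 hu.1.1 h1 h2 hne d1 d2
  have hnm : e ∉ UD r fs := by
    rintro ⟨f, hf, hef⟩
    have hstrict := aux_mem_up_strict hF hu hf
    exact hstrict.2 (aux_desc_antisymm hF.1 hF.2.2.1 hstrict.1 hef)
  have hset : Dle r e = insert e (UD r fs) := by
    ext z
    simp only [Dle, Set.mem_setOf_eq, Set.mem_insert_iff]
    constructor
    · intro hz
      by_cases hze : z = e
      · exact Or.inl hze
      · exact Or.inr (by
          obtain ⟨f, hf, hzf⟩ := aux_below_up hF hu hz hze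
          exact ⟨f, hf, hzf⟩)
    · rintro (rfl | ⟨f, hf, hzf⟩)
      · exact aux_desc_refl hF.1.1 z
      · exact aux_desc_trans hF.1.1 hzf (aux_mem_up_strict hF hu hf).1
  rw [hset, Set.ncard_insert_of_notMem hnm (Set.toFinite _),
    aux_split hnd hdisj]
  omega

lemma aux_block_le (hF : IsForest r) {b : Multiset X} {g : X} (h : r b g) :
    (b.map fun z => (Dle r z).ncard).sum ≤ (Dle r g).ncard := by
  haveI := hF.2.1
  have hnd : b.Nodup := hF.2.2.1 _ _ h
  have hdisj : ∀ f1 ∈ b, ∀ f2 ∈ b, ∀ z, descends r z f1 → descends r z f2 → f1 = f2 := by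
    intro f1 h1 f2 h2 z d1 d2
    by_contra hne
    exact aux_branch hF.1.1 hF.2.2.1 h h1 h2 hne d1 d2
  rw [← aux_split hnd hdisj]
  refine Set.ncard_le_ncard ?_ (Set.toFinite _)
  rintro z ⟨f, hf, hzf⟩
  exact aux_desc_trans hF.1.1 hzf ⟨b, h, hf⟩

lemma aux_block_lt (hF : IsForest r) {b : Multiset X} {g : X} (h : r b g)
    (hne : b ≠ ({g} : Multiset X)) :
    (b.map fun z => (Dle r z).ncard).sum + 1 ≤ (Dle r g).ncard := by
  haveI := hF.2.1
  have hnd : b.Nodup := hF.2.2.1 _ _ h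
  have hdisj : ∀ f1 ∈ b, ∀ f2 ∈ b, ∀ z, descends r z f1 → descends r z f2 → f1 = f2 := by
    intro f1 h1 f2 h2 z d1 d2
    by_contra hne'
    exact aux_branch hF.1.1 hF.2.2.1 h h1 h2 hne' d1 d2
  have hsub : UD r b ⊆ Dle r g \ {g} := by
    rintro z ⟨f, hf, hzf⟩
    refine ⟨aux_desc_trans hF.1.1 hzf ⟨b, h, hf⟩, ?_⟩
    simp only [Set.mem_singleton_iff]
    intro hzg
    rw [hzg] at hzf
    have hfg : f = g := aux_desc_antisymm hF.1 hF.2.2.1 ⟨b, h, hf⟩ hzf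
    exact hne (aux_mem_self hF.1.1 hF.2.2.1 h (hfg ▸ hf))
  have hgmem : g ∈ Dle r g := aux_desc_refl hF.1.1 g
  have hcard : (Dle r g).ncard = (Dle r g \ {g}).ncard + 1 := by
    have hni : g ∉ Dle r g \ {g} := fun hg => hg.2 rfl
    rw [← Set.ncard_insert_of_notMem hni (Set.toFinite _)]
    congr 1
    rw [Set.insert_diff_singleton, Set.insert_eq_self.2 hgmem]
  have hle : (UD r b).ncard ≤ (Dle r g \ {g}).ncard :=
    Set.ncard_le_ncard hsub (Set.toFinite _)
  rw [← aux_split hnd hdisj]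
  omega

lemma aux_desc_map {r' : Rel Y} {φ : X → Y} (hhom : BroadHom r r' φ) {f e : X}
    (h : descends r f e) : descends r' (φ f) (φ e) := by
  obtain ⟨fs, hfs, hffs⟩ := h
  exact ⟨fs.map φ, hhom _ _ hfs, Multiset.mem_map_of_mem _ hffs⟩

lemma aux_inj_card [Finite Y] {r' : Rel Y} {φ : X → Y} (hhom : BroadHom r r' φ)
    (hinj : Function.Injective φ) (x : X) :
    (Dle r x).ncard ≤ (Dle r' (φ x)).ncard := by
  refine Set.ncard_le_ncard_of_injOn φ (fun z hz => aux_desc_map hhom hz)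
    (Set.injOn_of_injective hinj) (Set.toFinite _)

end Aux

/-- A map of forests that is both a face map (injective) and
a degeneracy (surjective, with `ε ≰ φ l` for every leaf `l`) is an
isomorphism of broad posets. -/
theorem stmt10 {X Y : Type u} (r : Rel X) (r' : Rel Y) (φ : X → Y)
    (hF : IsForest r) (hF' : IsForest r')
    (hhom : BroadHom r r' φ) (hind : Independent r r' φ)
    (hinj : Function.Injective φ)
    (hsurj : Function.Surjective φ)
    (hleaf : ∀ l, IsLeaf r l → ¬ r' 0 (φ l)) :
    ∃ ψ : Y → X, BroadHom r' r ψ ∧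
      Function.LeftInverse ψ φ ∧ Function.RightInverse ψ φ := by
  classical
  haveI hfinX := hF.2.1
  haveI hfinY := hF'.2.1
  set ψ := Function.surjInv hsurj with hψdef
  have hli : Function.LeftInverse ψ φ := Function.leftInverse_surjInv ⟨hinj, hsurj⟩
  have hri : Function.RightInverse ψ φ := Function.rightInverse_surjInv hsurj
  -- Every maximal element of `Y` is the image of a maximal element of `X`.
  have hA1 : ∀ y, IsMaxEl r' y → ∃ x, IsMaxEl r x ∧ φ x = y := by
    intro y hy
    obtain ⟨x₀, rfl⟩ := hsurj y
    obtain ⟨rt, ⟨hrtmax, hrtdesc⟩, _⟩ := hF.2.2.2.2 x₀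
    exact ⟨rt, hrtmax, hy _ (aux_desc_map hhom hrtdesc)⟩
  -- `φ` sends maximal elements to maximal elements (uses independence).
  have hA2 : ∀ x, IsMaxEl r x → IsMaxEl r' (φ x) := by
    obtain ⟨rs, rs', es, ⟨hrsnd, hrsiff⟩, ⟨hrs'nd, hrs'iff⟩, p, hsnd, hsum, hrels⟩ := hind
    have hpnd : (p.map Prod.snd).Nodup := by rw [hsnd]; exact hrs'nd
    have hblocks : ∀ q ∈ p, q.1 = ({q.2} : Multiset Y) := by
      intro q hq
      have hq2 : q.2 ∈ rs' := by rw [← hsnd]; exact Multiset.mem_map_of_mem _ hq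
      have hq2max : IsMaxEl r' q.2 := (hrs'iff q.2).1 hq2
      obtain ⟨xw, hxwmax, hxw⟩ := hA1 _ hq2max
      have hxwrs : xw ∈ rs := (hrsiff xw).2 hxwmax
      have h1 : φ xw ∈ (p.map Prod.fst).sum := by
        rw [hsum]
        exact Multiset.mem_add.2 (Or.inl (Multiset.mem_map_of_mem _ hxwrs))
      obtain ⟨b2, hb2mem, hb2⟩ := aux_mem_msum.1 h1
      obtain ⟨q2, hq2p, rfl⟩ := Multiset.mem_map.1 hb2mem
      have hdq : descends r' (φ xw) q2.2 := ⟨q2.1, hrels q2 hq2p, hb2⟩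
      have hdq2 : descends r' q.2 q2.2 := hxw ▸ hdq
      have hq22 : q2.2 = q.2 := hq2max _ hdq2
      have hqq : q2 = q := Multiset.inj_on_of_nodup_map hpnd q2 hq2p q hq hq22
      rw [← hqq]
      have hmem : q2.2 ∈ q2.1 := by rw [hq22, ← hxw]; exact hb2
      exact aux_mem_self hF'.1.1 hF'.2.2.1 (hrels q2 hq2p) hmem
    have hsum2 : rs.map φ + es = rs' := by
      rw [← hsum, aux_blocks_sum hblocks, hsnd]
    intro x hx
    have hx' : φ x ∈ rs' := by
      rw [← hsum2]
      exact Multiset.mem_add.2 (Or.inl (Multiset.mem_map_of_mem _ ((hrsiff x).2 hx)))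
    exact (hrs'iff _).1 hx'
  -- Cardinality of cones agrees at maximal elements.
  have hrootcard : ∀ y, IsMaxEl r' y → (Dle r' y).ncard = (Dle r (ψ y)).ncard := by
    intro y hy
    obtain ⟨x, hxmax, hxy⟩ := hA1 y hy
    have hψy : ψ y = x := hinj (by rw [hri y, hxy])
    rw [hψy]
    have himg : φ '' (Dle r x) = Dle r' y := by
      apply Set.Subset.antisymm
      · rintro _ ⟨z, hz, rfl⟩
        exact hxy ▸ aux_desc_map hhom hz
      · intro z' hz'
        obtain ⟨z, rfl⟩ := hsurj z'
        obtain ⟨rtz, ⟨hrtzmax, hrtzd⟩, _⟩ := hF.2.2.2.2 z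
        obtain ⟨m, hm, hmu⟩ := hF'.2.2.2.2 (φ z)
        have e1 : φ rtz = m := hmu _ ⟨hA2 _ hrtzmax, aux_desc_map hhom hrtzd⟩
        have e2 : y = m := hmu _ ⟨hy, hz'⟩
        have hrx : rtz = x := hinj (by rw [e1, ← e2, hxy])
        exact ⟨z, hrx ▸ hrtzd, rfl⟩
    rw [← himg, Set.ncard_image_of_injOn hinj.injOn]
  -- Main invariant, proved by downward induction from the roots.
  have hInv : ∀ w : Y, ((Dle r' w).ncard = (Dle r (ψ w)).ncard) ∧
      (∀ fs', upTuple r' w fs' → ∃ hs, upTuple r (ψ w) hs ∧ hs.map φ = fs') := by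
    intro w
    refine (aux_sgt_wf hF').induction
      (C := fun w => ((Dle r' w).ncard = (Dle r (ψ w)).ncard) ∧
        (∀ fs', upTuple r' w fs' → ∃ hs, upTuple r (ψ w) hs ∧ hs.map φ = fs')) w ?_
    clear w
    intro w IH
    have hE : (Dle r' w).ncard = (Dle r (ψ w)).ncard := by
      by_cases hwmax : IsMaxEl r' w
      · exact hrootcard w hwmax
      · have hex : ∃ s, descends r' w s ∧ s ≠ w := by
          by_contra hcon
          push_neg at hcon
          exact hwmax hcon
        obtain ⟨s, hws, hsne⟩ := hex
        obtain ⟨c, ks, hcup, hwks, _⟩ := aux_parent hF' s w ⟨hws, Ne.symm hsne⟩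
        have hcslt : SLt r' w c := aux_mem_up_strict hF' hcup hwks
        obtain ⟨Ec, Cc⟩ := IH c hcslt
        obtain ⟨hsc, hupc, hmapc⟩ := Cc ks hcup
        have r1 := aux_cone hF' hcup
        have r2 := aux_cone hF hupc
        have hkssum : (ks.map fun k => (Dle r' k).ncard).sum
            = (hsc.map fun h => (Dle r' (φ h)).ncard).sum := by
          rw [← hmapc, Multiset.map_map]; rfl
        have hterm : ∀ h ∈ hsc, (Dle r h).ncard = (Dle r' (φ h)).ncard := by
          refine aux_termwise (fun h _ => aux_inj_card hhom hinj h) ?_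
          omega
        have hwks' : w ∈ hsc.map φ := by rw [hmapc]; exact hwks
        obtain ⟨h0, hh0, hwh0⟩ := Multiset.mem_map.1 hwks'
        rw [← hwh0, hli h0]
        exact (hterm h0 hh0).symm
    refine ⟨hE, ?_⟩
    intro fs' hufs'
    have hφx : φ (ψ w) = w := hri w
    have hxnl : ¬ IsLeaf r (ψ w) := by
      intro hlf
      have hD : Dle r (ψ w) = {ψ w} := by
        ext z
        simp only [Dle, Set.mem_setOf_eq, Set.mem_singleton_iff]
        constructor
        · rintro ⟨gs, hgs, hzgs⟩
          by_cases hgs1 : gs = ({ψ w} : Multiset X)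
          · rw [hgs1] at hzgs; exact Multiset.mem_singleton.1 hzgs
          · exact absurd ⟨gs, hgs, hgs1⟩ hlf
        · rintro rfl; exact aux_desc_refl hF.1.1 _
      have hc1 : (Dle r (ψ w)).ncard = 1 := by rw [hD]; exact Set.ncard_singleton _
      rcases Multiset.empty_or_exists_mem fs' with h0 | ⟨g, hg⟩
      · refine hleaf (ψ w) hlf ?_
        rw [hφx]
        have := hufs'.1.1
        rwa [h0] at this
      · have hgslt : SLt r' g w := aux_mem_up_strict hF' hufs' hg
        have hpair : ({g, w} : Set Y) ⊆ Dle r' w := by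
          intro z hz
          simp only [Set.mem_insert_iff, Set.mem_singleton_iff] at hz
          rcases hz with rfl | rfl
          · exact hgslt.1
          · exact aux_desc_refl hF'.1.1 _
        have h2le : (2 : ℕ) ≤ (Dle r' w).ncard := by
          rw [← Set.ncard_pair hgslt.2]
          exact Set.ncard_le_ncard hpair (Set.toFinite _)
        omega
    rcases hF.2.2.2.1 (ψ w) with hl | ⟨hs, hupx⟩
    · exact absurd hl hxnl
    have hrelw : r' (hs.map φ) w := by rw [← hφx]; exact hhom _ _ hupx.1.1
    have hne2 : hs.map φ ≠ ({w} : Multiset Y) := by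
      intro hh
      obtain ⟨a, ha, ha2⟩ := Multiset.map_eq_singleton.1 hh
      have haψ : a = ψ w := hinj (by rw [ha2, hφx])
      exact hupx.1.2 (by rw [← haψ]; exact ha)
    obtain ⟨p, hpsnd, hpsum, hprels⟩ := hufs'.2 _ hrelw hne2
    have hFG : ∀ q ∈ p, ((q.1.map fun z => (Dle r' z).ncard).sum) ≤ (Dle r' q.2).ncard :=
      fun q hq => aux_block_le hF' (hprels q hq)
    have hsums : (p.map fun q => (q.1.map fun z => (Dle r' z).ncard).sum).sum
        = (p.map fun q => (Dle r' q.2).ncard).sum := by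
      have e1 : (p.map fun q => (Dle r' q.2).ncard).sum
          = (fs'.map fun g => (Dle r' g).ncard).sum := by
        rw [← hpsnd, Multiset.map_map]; rfl
      have e2 : (p.map fun q => (q.1.map fun z => (Dle r' z).ncard).sum).sum
          = ((hs.map φ).map fun z => (Dle r' z).ncard).sum := by
        rw [← hpsum, aux_sum_sum, Multiset.map_map]; rfl
      have e3 : ((hs.map φ).map fun z => (Dle r' z).ncard).sum
          = (hs.map fun h => (Dle r' (φ h)).ncard).sum := by
        rw [Multiset.map_map]; rfl
      have le1 : (hs.map fun h => (Dle r h).ncard).sum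
          ≤ (hs.map fun h => (Dle r' (φ h)).ncard).sum :=
        Multiset.sum_map_le_sum_map _ _ (fun h _ => aux_inj_card hhom hinj h)
      have c1 := aux_cone hF hupx
      have c2 := aux_cone hF' hufs'
      have le3 : (p.map fun q => (q.1.map fun z => (Dle r' z).ncard).sum).sum
          ≤ (p.map fun q => (Dle r' q.2).ncard).sum :=
        Multiset.sum_map_le_sum_map _ _ hFG
      omega
    have hterm2 := aux_termwise hFG hsums
    have hblocks : ∀ q ∈ p, q.1 = ({q.2} : Multiset Y) := by
      intro q hq
      by_contra hneq
      have hlt := aux_block_lt hF' (hprels q hq) hneq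
      have heq := hterm2 q hq
      omega
    refine ⟨hs, hupx, ?_⟩
    rw [← hpsum, aux_blocks_sum hblocks, hpsnd]
  -- `ψ` is a broad map, by upward induction.
  have hmain : ∀ w : Y, ∀ gs', r' gs' w → r (gs'.map ψ) (ψ w) := by
    intro w
    refine (aux_slt_wf hF').induction
      (C := fun w => ∀ gs', r' gs' w → r (gs'.map ψ) (ψ w)) w ?_
    clear w
    intro w IH gs' hgs'
    by_cases hsing : gs' = ({w} : Multiset Y)
    · rw [hsing]
      simpa using hF.1.1.1 (ψ w)
    · obtain ⟨fs', hufs', p, hpsnd, hpsum, hprels⟩ := aux_rel_decomp hF' hgs' hsing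
      obtain ⟨hs, hupx, hmap⟩ := (hInv w).2 fs' hufs'
      have hfs'ψ : fs'.map ψ = hs := by
        rw [← hmap, Multiset.map_map]
        calc hs.map (ψ ∘ φ) = hs.map id := Multiset.map_congr rfl (fun a _ => hli a)
        _ = hs := Multiset.map_id hs
      have hfst : ((p.map fun q => (q.1.map ψ, ψ q.2)).map Prod.fst).sum = gs'.map ψ := by
        rw [Multiset.map_map]
        have h1 : (p.map (Prod.fst ∘ fun q => (q.1.map ψ, ψ q.2)))
            = (p.map Prod.fst).map (Multiset.map ψ) := by
          rw [Multiset.map_map]; rfl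
        rw [h1, ← aux_map_msum, hpsum]
      have hsnd2 : (p.map fun q => (q.1.map ψ, ψ q.2)).map Prod.snd = hs := by
        rw [Multiset.map_map]
        have h1 : (p.map (Prod.snd ∘ fun q => (q.1.map ψ, ψ q.2)))
            = (p.map Prod.snd).map ψ := by rw [Multiset.map_map]; rfl
        rw [h1, hpsnd, hfs'ψ]
      have hall : ∀ q' ∈ p.map (fun q => (q.1.map ψ, ψ q.2)), r q'.1 q'.2 := by
        intro q' hq'
        obtain ⟨q, hq, rfl⟩ := Multiset.mem_map.1 hq'
        have hq2fs : q.2 ∈ fs' := by rw [← hpsnd]; exact Multiset.mem_map_of_mem _ hq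
        exact IH q.2 (aux_mem_up_strict hF' hufs' hq2fs) _ (hprels q hq)
      have houter : r ((p.map fun q => (q.1.map ψ, ψ q.2)).map Prod.snd) (ψ w) := by
        rw [hsnd2]; exact hupx.1.1
      have key := hF.1.1.2 _ _ houter hall
      rwa [hfst] at key
  exact ⟨ψ, fun fs e h => hmain e fs h, hli, hri⟩

end BroadPaper
end

section
/- Let S and T be simple broad posets. Define the tensor product S ⊗ T on the underlying set S × T, with broad relations generated by s̲ × t ≤ (s,t) for each relation s̲ ≤ s in S and t ∈ T, and s × t̲ ≤ (s,t) for each relation t̲ ≤ t in T and s ∈ S. Then S ⊗ T is a simple broad poset. Moreover, for any non-identity broad relation (s_1,t_1)⋯(s_n,t_n) ≤ (s,t) in S ⊗ T: (i) s_i ≤_d s and t_j ≤_d t for all i,j; (ii) for i ≠ j, either s_i s_j appears in some tuple ≤ s in S, or t_i t_j appears in some tuple ≤ t in T; (iii) if both s_i, s_j and t_i, t_j are ≤_d-comparable pairs then i = j. -/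
universe u

namespace BroadPaper


section Aux

variable {X : Type u} {r : Rel X}

lemma rel_refl (hr : IsBroad r) (e : X) : r {e} e := hr.1.1 e

lemma subst_one_s12 [DecidableEq X] (hr : IsBroad r) {ms us : Multiset X} {e a : X}
    (h : r ms e) (ha : a ∈ ms) (hu : r us a) : r (us + ms.erase a) e := by
  obtain ⟨ms', rfl⟩ := Multiset.exists_cons_of_mem ha
  set p : Multiset (Multiset X × X) :=
    (us, a) ::ₘ ms'.map (fun z => (({z} : Multiset X), z)) with hp
  have h1 : p.map Prod.snd = a ::ₘ ms' := by
    simp [hp, Multiset.map_map, Function.comp]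
  have h2 : (p.map Prod.fst).sum = us + ms' := by
    simp [hp, Multiset.map_map, Function.comp, Multiset.sum_map_singleton]
  have h3 : ∀ q ∈ p, r q.1 q.2 := by
    intro q hq
    rcases Multiset.mem_cons.1 hq with hq | hq
    · rw [hq]; exact hu
    · obtain ⟨z, _, rfl⟩ := Multiset.mem_map.1 hq
      exact rel_refl hr z
  have := hr.1.2 p e (by rw [h1]; exact h) h3
  rw [h2] at this
  simpa [Multiset.erase_cons_head] using this

lemma desc_refl (hr : IsBroad r) (e : X) : descends r e e :=
  ⟨{e}, rel_refl hr e, Multiset.mem_singleton_self e⟩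

lemma desc_trans (hr : IsBroad r) {z a e : X}
    (h1 : descends r z a) (h2 : descends r a e) : descends r z e := by
  classical
  obtain ⟨us, hu, hz⟩ := h1
  obtain ⟨vs, hv, ha⟩ := h2
  exact ⟨us + vs.erase a, subst_one_s12 hr hv ha hu, Multiset.mem_add.2 (Or.inl hz)⟩

lemma pair_of_mem [DecidableEq X] {W : Multiset X} {x y : X} (hx : x ∈ W) (hy : y ∈ W.erase x) :
    ∃ rest, W = x ::ₘ y ::ₘ rest := by
  obtain ⟨t, ht⟩ := Multiset.exists_cons_of_mem hx
  rw [ht, Multiset.erase_cons_head] at hy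
  obtain ⟨t', rfl⟩ := Multiset.exists_cons_of_mem hy
  exact ⟨t', ht⟩

lemma sib_lift [DecidableEq X] (hr : IsBroad r) {ms : Multiset X} {e a a' z z' : X}
    (h : r ms e) (ha : a ∈ ms) (ha' : a' ∈ ms.erase a)
    (hz : descends r z a) (hz' : descends r z' a') :
    ∃ rest, r (z ::ₘ z' ::ₘ rest) e := by
  classical
  obtain ⟨us, hu, hzu⟩ := hz
  obtain ⟨vs, hv, hzv⟩ := hz'
  obtain ⟨rest, rfl⟩ := pair_of_mem ha ha'
  have h1 : r (us + (a' ::ₘ rest)) e := by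
    have := subst_one_s12 hr h (Multiset.mem_cons_self a _) hu
    rwa [Multiset.erase_cons_head] at this
  have h2 : r (vs + (us + rest)) e := by
    have ha'mem : a' ∈ us + (a' ::ₘ rest) :=
      Multiset.mem_add.2 (Or.inr (Multiset.mem_cons_self a' _))
    have := subst_one_s12 hr h1 ha'mem hv
    rwa [Multiset.erase_add_right_pos _ (Multiset.mem_cons_self a' _),
      Multiset.erase_cons_head] at this
  set W := vs + (us + rest) with hW
  have hzW : z ∈ W := Multiset.mem_add.2 (Or.inr (Multiset.mem_add.2 (Or.inl hzu)))
  have hz'W : z' ∈ W.erase z := by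
    by_cases hzz : z' = z
    · subst hzz
      rw [← Multiset.count_pos, Multiset.count_erase_self]
      have c1 : 0 < Multiset.count z' vs := Multiset.count_pos.2 hzv
      have c2 : 0 < Multiset.count z' us := Multiset.count_pos.2 hzu
      simp only [hW, Multiset.count_add]
      omega
    · rw [Multiset.mem_erase_of_ne hzz]
      exact Multiset.mem_add.2 (Or.inl hzv)
  obtain ⟨rest', hW'⟩ := pair_of_mem hzW hz'W
  exact ⟨rest', hW' ▸ h2⟩

lemma no_common [DecidableEq X] (hr : IsBroad r) (hs : Simple r) {ms : Multiset X} {e a a' z : X}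
    (h : r ms e) (ha : a ∈ ms) (ha' : a' ∈ ms.erase a)
    (hz : descends r z a) (hz' : descends r z a') : False := by
  obtain ⟨rest, hrel⟩ := sib_lift hr h ha ha' hz hz'
  have := hs _ _ hrel
  simp [Multiset.nodup_cons] at this

lemma self_singleton (hr : IsBroad r) (hs : Simple r) {W : Multiset X} {a : X}
    (h : r W a) (haW : a ∈ W) : W = {a} := by
  classical
  by_contra hne
  obtain ⟨W', rfl⟩ := Multiset.exists_cons_of_mem haW
  have hW' : W' ≠ 0 := by rintro rfl; exact hne (Multiset.cons_zero a)
  obtain ⟨c, hc⟩ := Multiset.exists_mem_of_ne_zero hW'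
  have h2 : r ((a ::ₘ W') + W') a := by
    have := subst_one_s12 hr h (Multiset.mem_cons_self a _) h
    rwa [Multiset.erase_cons_head] at this
  have hnd := hs _ _ h2
  rw [Multiset.nodup_iff_count_le_one] at hnd
  have hcc := hnd c
  have hc1 : 0 < Multiset.count c W' := Multiset.count_pos.2 hc
  have hmono : Multiset.count c W' ≤ Multiset.count c (a ::ₘ W') :=
    Multiset.count_le_of_le c (Multiset.le_cons_self W' a)
  rw [Multiset.count_add] at hcc
  omega

lemma desc_antisymm (hr : IsBroad r) (hs : Simple r) {a b : X}
    (h1 : descends r a b) (h2 : descends r b a) : a = b := by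
  classical
  obtain ⟨us, hu, hau⟩ := h1
  obtain ⟨vs, hv, hbv⟩ := h2
  have hrel : r (us + vs.erase b) a := subst_one_s12 hr hv hbv hu
  have hsing := self_singleton hr hs hrel (Multiset.mem_add.2 (Or.inl hau))
  have hus : us = {a} := by
    have hle : us ≤ us + vs.erase b := Multiset.le_add_right _ _
    rw [hsing] at hle
    rcases Multiset.le_singleton.1 hle with h | h
    · exact absurd hau (by rw [h]; exact Multiset.notMem_zero a)
    · exact h
  have hvse : vs.erase b = 0 := by
    have := congrArg Multiset.card hsing
    rw [Multiset.card_add] at this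
    have : Multiset.card (vs.erase b) = 0 := by
      have hub : Multiset.card us = 1 := by rw [hus]; simp
      simp at this; omega
    exact Multiset.card_eq_zero.1 this
  have hvs : vs = {b} := by
    obtain ⟨t, rfl⟩ := Multiset.exists_cons_of_mem hbv
    rw [Multiset.erase_cons_head] at hvse
    rw [hvse, Multiset.cons_zero]
  exact hr.2 a b (hus ▸ hu) (hvs ▸ hv)

lemma mem_sum_map {γ δ : Type u} {f : γ → Multiset δ} {t : Multiset γ} {y : δ}
    (h : y ∈ (t.map f).sum) : ∃ q ∈ t, y ∈ f q := by
  induction t using Multiset.induction with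
  | empty => simp at h
  | cons a s ih =>
    rw [Multiset.map_cons, Multiset.sum_cons, Multiset.mem_add] at h
    rcases h with h | h
    · exact ⟨a, Multiset.mem_cons_self a s, h⟩
    · obtain ⟨q, hq, h⟩ := ih h
      exact ⟨q, Multiset.mem_cons_of_mem hq, h⟩

lemma pair_split {γ δ : Type u} [DecidableEq γ] [DecidableEq δ] (f : γ → Multiset δ) (p : Multiset γ) (x y : δ)
    (hx : x ∈ (p.map f).sum) (hy : y ∈ ((p.map f).sum).erase x) :
    (∃ q ∈ p, x ∈ f q ∧ y ∈ (f q).erase x) ∨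
    (∃ q ∈ p, ∃ q' ∈ p.erase q, x ∈ f q ∧ y ∈ f q') := by
  classical
  induction p using Multiset.induction with
  | empty => simp at hx
  | cons q t ih =>
    rw [Multiset.map_cons, Multiset.sum_cons] at hx hy
    by_cases hxq : x ∈ f q
    · by_cases hyq : y ∈ (f q).erase x
      · exact Or.inl ⟨q, Multiset.mem_cons_self q t, hxq, hyq⟩
      · rw [Multiset.erase_add_left_pos _ hxq] at hy
        have hyS : y ∈ (t.map f).sum := by
          rcases Multiset.mem_add.1 hy with h | h
          · exact absurd h hyq
          · exact h
        obtain ⟨q', hq't, hyq'⟩ := mem_sum_map hyS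
        exact Or.inr ⟨q, Multiset.mem_cons_self q t, q',
          by rw [Multiset.erase_cons_head]; exact hq't, hxq, hyq'⟩
    · have hxS : x ∈ (t.map f).sum := by
        rcases Multiset.mem_add.1 hx with h | h
        · exact absurd h hxq
        · exact h
      rw [Multiset.erase_add_right_pos _ hxS] at hy
      rcases Multiset.mem_add.1 hy with hyq | hyS
      · obtain ⟨q', hq't, hxq'⟩ := mem_sum_map hxS
        refine Or.inr ⟨q', Multiset.mem_cons_of_mem hq't, q, ?_, hxq', hyq⟩
        by_cases h : q' = q
        · subst h; rw [Multiset.erase_cons_head]; exact hq't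
        · rw [Multiset.erase_cons_tail _ (fun hh => h hh.symm)]
          exact Multiset.mem_cons_self q _
      · rcases ih hxS hyS with ⟨q1, hq1, hx1, hy1⟩ | ⟨q1, hq1, q2, hq2, hx1, hy1⟩
        · exact Or.inl ⟨q1, Multiset.mem_cons_of_mem hq1, hx1, hy1⟩
        · refine Or.inr ⟨q1, Multiset.mem_cons_of_mem hq1, q2, ?_, hx1, hy1⟩
          by_cases h : q = q1
          · subst h; rw [Multiset.erase_cons_head]
            exact Multiset.mem_of_mem_erase hq2
          · rw [Multiset.erase_cons_tail _ h]
            exact Multiset.mem_cons_of_mem hq2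

end Aux


lemma tensor_inv {A B : Type u} [DecidableEq A] [DecidableEq B] {rS : Rel A} {rT : Rel B}
    (hS : IsBroad rS) (hsS : Simple rS) (hT : IsBroad rT) (hsT : Simple rT) :
    ∀ (xs : Multiset (A × B)) (z : A × B), tensorRel rS rT xs z →
      (∀ x ∈ xs, descends rS x.1 z.1 ∧ descends rT x.2 z.2) ∧
      (∀ x y : A × B, x ∈ xs → y ∈ xs.erase x →
        ((∃ ss, rS (x.1 ::ₘ y.1 ::ₘ ss) z.1) ∨ (∃ ts, rT (x.2 ::ₘ y.2 ::ₘ ts) z.2)) ∧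
        ¬ (Comparable rS x.1 y.1 ∧ Comparable rT x.2 y.2)) := by
  intro xs z h
  induction h with
  | of fs e hgen =>
    classical
    rcases hgen with ⟨as, has, rfl⟩ | ⟨bs, hbs, rfl⟩
    · have hinj : Function.Injective (fun a : A => (a, e.2)) := by
        intro u v huv; exact congrArg Prod.fst huv
      constructor
      · intro x hx
        obtain ⟨a, haas, rfl⟩ := Multiset.mem_map.1 hx
        exact ⟨⟨as, has, haas⟩, desc_refl hT e.2⟩
      · intro x y hx hy
        obtain ⟨a, ha, rfl⟩ := Multiset.mem_map.1 hx
        rw [← Multiset.map_erase _ hinj a as] at hy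
        obtain ⟨a', ha', rfl⟩ := Multiset.mem_map.1 hy
        constructor
        · left
          obtain ⟨rest, hrest⟩ := pair_of_mem ha ha'
          exact ⟨rest, hrest ▸ has⟩
        · rintro ⟨hcomp, -⟩
          rcases hcomp with hd | hd
          · exact no_common hS hsS has ha ha' (desc_refl hS a) hd
          · exact no_common hS hsS has ha ha' hd (desc_refl hS a')
    · have hinj : Function.Injective (fun b : B => (e.1, b)) := by
        intro u v huv; exact congrArg Prod.snd huv
      constructor
      · intro x hx
        obtain ⟨b, hbbs, rfl⟩ := Multiset.mem_map.1 hx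
        exact ⟨desc_refl hS e.1, ⟨bs, hbs, hbbs⟩⟩
      · intro x y hx hy
        obtain ⟨b, hb, rfl⟩ := Multiset.mem_map.1 hx
        rw [← Multiset.map_erase _ hinj b bs] at hy
        obtain ⟨b', hb', rfl⟩ := Multiset.mem_map.1 hy
        constructor
        · right
          obtain ⟨rest, hrest⟩ := pair_of_mem hb hb'
          exact ⟨rest, hrest ▸ hbs⟩
        · rintro ⟨-, hcomp⟩
          rcases hcomp with hd | hd
          · exact no_common hT hsT hbs hb hb' (desc_refl hT b) hd
          · exact no_common hT hsT hbs hb hb' hd (desc_refl hT b')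
  | refl e =>
    constructor
    · intro x hx
      rw [Multiset.mem_singleton] at hx
      subst hx
      exact ⟨desc_refl hS x.1, desc_refl hT x.2⟩
    · intro x y hx hy
      rw [Multiset.mem_singleton] at hx
      subst hx
      rw [← Multiset.cons_zero, Multiset.erase_cons_head] at hy
      exact absurd hy (Multiset.notMem_zero y)
  | btrans p e houter hinner ihouter ihinner =>
    constructor
    · intro x hx
      obtain ⟨q, hq, hxq⟩ := mem_sum_map hx
      have hin := (ihinner q hq).1 x hxq
      have hout := ihouter.1 q.2 (Multiset.mem_map_of_mem _ hq)
      exact ⟨desc_trans hS hin.1 hout.1, desc_trans hT hin.2 hout.2⟩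
    · intro x y hx hy
      rcases pair_split Prod.fst p x y hx hy with
        ⟨q, hq, hxq, hyq⟩ | ⟨q, hq, q', hq', hxq, hyq'⟩
      · -- same inner tuple
        have hin := (ihinner q hq).2 x y hxq hyq
        refine ⟨?_, hin.2⟩
        have hqdesc := ihouter.1 q.2 (Multiset.mem_map_of_mem _ hq)
        rcases hin.1 with ⟨ss, hss⟩ | ⟨ts, hts⟩
        · left
          obtain ⟨us, hus, hmem⟩ := hqdesc.1
          have hup := subst_one_s12 hS hus hmem hss
          refine ⟨ss + us.erase q.2.1, ?_⟩
          rwa [Multiset.cons_add, Multiset.cons_add] at hup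
        · right
          obtain ⟨vs, hvs, hmem⟩ := hqdesc.2
          have hup := subst_one_s12 hT hvs hmem hts
          refine ⟨ts + vs.erase q.2.2, ?_⟩
          rwa [Multiset.cons_add, Multiset.cons_add] at hup
      · -- distinct inner tuples
        have hxd := (ihinner q hq).1 x hxq
        have hyd := (ihinner q' (Multiset.mem_of_mem_erase hq')).1 y hyq'
        obtain ⟨p₀, rfl⟩ := Multiset.exists_cons_of_mem hq
        rw [Multiset.erase_cons_head] at hq'
        have hmem1 : q.2 ∈ (q ::ₘ p₀).map Prod.snd := by
          rw [Multiset.map_cons]; exact Multiset.mem_cons_self _ _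
        have hmem2 : q'.2 ∈ ((q ::ₘ p₀).map Prod.snd).erase q.2 := by
          rw [Multiset.map_cons, Multiset.erase_cons_head]
          exact Multiset.mem_map_of_mem _ hq'
        have hout := ihouter.2 q.2 q'.2 hmem1 hmem2
        constructor
        · rcases hout.1 with ⟨ss, hss⟩ | ⟨ts, hts⟩
          · left
            exact sib_lift hS hss (Multiset.mem_cons_self _ _)
              (by rw [Multiset.erase_cons_head]; exact Multiset.mem_cons_self _ _)
              hxd.1 hyd.1
          · right
            exact sib_lift hT hts (Multiset.mem_cons_self _ _)
              (by rw [Multiset.erase_cons_head]; exact Multiset.mem_cons_self _ _)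
              hxd.2 hyd.2
        · rintro ⟨hcS, hcT⟩
          rcases hout.1 with ⟨ss, hss⟩ | ⟨ts, hts⟩
          · rcases hcS with hd | hd
            · exact no_common hS hsS hss (Multiset.mem_cons_self _ _)
                (by rw [Multiset.erase_cons_head]; exact Multiset.mem_cons_self _ _)
                hxd.1 (desc_trans hS hd hyd.1)
            · exact no_common hS hsS hss (Multiset.mem_cons_self _ _)
                (by rw [Multiset.erase_cons_head]; exact Multiset.mem_cons_self _ _)
                (desc_trans hS hd hxd.1) hyd.1
          · rcases hcT with hd | hd
            · exact no_common hT hsT hts (Multiset.mem_cons_self _ _)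
                (by rw [Multiset.erase_cons_head]; exact Multiset.mem_cons_self _ _)
                hxd.2 (desc_trans hT hd hyd.2)
            · exact no_common hT hsT hts (Multiset.mem_cons_self _ _)
                (by rw [Multiset.erase_cons_head]; exact Multiset.mem_cons_self _ _)
                (desc_trans hT hd hxd.2) hyd.2

/-- The tensor product of simple broad posets is a simple
broad poset, and any non-identity relation
`(s₁,t₁) ⋯ (sₙ,tₙ) ≤ (s,t)` satisfies: (i) `sᵢ ≤_d s` and `tⱼ ≤_d t`;
(ii) for distinct positions, either `sᵢ sⱼ` appears in a tuple `≤ s` or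
`tᵢ tⱼ` appears in a tuple `≤ t`; (iii) no two distinct positions have both
coordinates `≤_d`-comparable. -/
theorem stmt12 {A B : Type u} (rS : Rel A) (rT : Rel B)
    (hS : IsBroad rS) (hsS : Simple rS) (hT : IsBroad rT) (hsT : Simple rT) :
    IsBroad (tensorRel rS rT) ∧ Simple (tensorRel rS rT) ∧
    (∀ (xs : Multiset (A × B)) (s : A) (t : B),
      tensorRel rS rT xs (s, t) → xs ≠ ({(s, t)} : Multiset (A × B)) →
      ((∀ x ∈ xs, descends rS x.1 s ∧ descends rT x.2 t) ∧
       (∀ (x y : A × B) (rest : Multiset (A × B)), xs = x ::ₘ y ::ₘ rest →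
         (∃ ss, rS (x.1 ::ₘ y.1 ::ₘ ss) s) ∨
         (∃ ts, rT (x.2 ::ₘ y.2 ::ₘ ts) t)) ∧
       (∀ (x y : A × B) (rest : Multiset (A × B)), xs = x ::ₘ y ::ₘ rest →
         ¬ (Comparable rS x.1 y.1 ∧ Comparable rT x.2 y.2)))) := by
  classical
  have inv := tensor_inv hS hsS hT hsT
  refine ⟨⟨⟨fun e => GenRel.refl e, fun p e h1 h2 => GenRel.btrans p e h1 h2⟩, ?_⟩, ?_, ?_⟩
  · intro e f h1 h2
    have d1 := (inv _ _ h1).1 e (Multiset.mem_singleton_self e)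
    have d2 := (inv _ _ h2).1 f (Multiset.mem_singleton_self f)
    exact Prod.ext (desc_antisymm hS hsS d1.1 d2.1) (desc_antisymm hT hsT d1.2 d2.2)
  · intro fs z h
    classical
    rw [Multiset.nodup_iff_count_le_one]
    intro x
    by_contra hc
    push_neg at hc
    have hx : x ∈ fs := by rw [← Multiset.count_pos]; omega
    have hx2 : x ∈ fs.erase x := by
      rw [← Multiset.count_pos, Multiset.count_erase_self]; omega
    exact ((inv _ _ h).2 x x hx hx2).2
      ⟨Or.inl (desc_refl hS x.1), Or.inl (desc_refl hT x.2)⟩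
  · intro xs s t h _
    have I := inv _ _ h
    refine ⟨I.1, ?_, ?_⟩
    · intro x y rest hxs
      exact (I.2 x y (by rw [hxs]; exact Multiset.mem_cons_self _ _)
        (by rw [hxs, Multiset.erase_cons_head]; exact Multiset.mem_cons_self _ _)).1
    · intro x y rest hxs
      exact (I.2 x y (by rw [hxs]; exact Multiset.mem_cons_self _ _)
        (by rw [hxs, Multiset.erase_cons_head]; exact Multiset.mem_cons_self _ _)).2

end BroadPaper
end
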